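/- Let s ≥ 3 be odd and t ≥ 3. Let x = (i, j) and y = (i', j) be vertices of C_s □ C_t lying in the same copy of C_s whose first coordinates i and i' are at distance (s−1)/2 in C_s (i.e., x and y are diametral in that copy of C_s), and let z = (i, j') where j' is adjacent to j in C_t. Then {x, y, z} is a resolving set of C_s □ C_t (and hence a metric basis, since dim(C_s □ C_t) = 3). -/

import Mathlib

open SimpleGraph

section Aux

lemma mod_two_cases {n x : ℕ} (h : x < 2 * n) : x % n = x ∨ (x % n = x - n ∧ n ≤ x) := by
  rcases lt_or_ge x n with h1 | h1
  · left; exact Nat.mod_eq_of_lt h1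
  · right; refine ⟨?_, h1⟩
    rw [Nat.mod_eq_sub_mod h1, Nat.mod_eq_of_lt (by omega)]

lemma val_sub' {n : ℕ} (a m : Fin n) :
    (a - m).val + m.val = a.val ∨ (a - m).val + m.val = a.val + n := by
  have key : (a - m).val = ((n - m.val) + a.val) % n := by rw [Fin.sub_def]
  have hm := m.isLt; have ha := a.isLt
  rcases mod_two_cases (show (n - m.val) + a.val < 2 * n by omega) with h | ⟨h, h2⟩ <;> omega

end Aux

section Cycle

variable {n : ℕ} [NeZero n] (hn : 3 ≤ n)
include hn
open Fin.NatCast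

lemma cycle_conn : (cycleGraph n).Connected := by
  obtain ⟨m, rfl⟩ : ∃ m, n = m + 1 := ⟨n - 1, by omega⟩
  exact cycleGraph_connected

lemma cycle_adj_succ (u : Fin n) : (cycleGraph n).Adj u (u + 1) := by
  rw [cycleGraph_adj']
  right
  rw [add_sub_cancel_left, Fin.val_one']
  exact Nat.mod_eq_of_lt (by omega)

lemma cycle_dist_le_cast (u : Fin n) : ∀ k : ℕ, (cycleGraph n).dist u (u + (k : Fin n)) ≤ k := by
  intro k
  induction k with
  | zero => simp
  | succ k ih =>
    have h1 : (((k : ℕ) + 1 : ℕ) : Fin n) = (k : Fin n) + 1 := by push_cast; ring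
    rw [h1, ← add_assoc]
    calc (cycleGraph n).dist u (u + (k : Fin n) + 1)
        ≤ (cycleGraph n).dist u (u + (k : Fin n)) +
          (cycleGraph n).dist (u + (k : Fin n)) (u + (k : Fin n) + 1) :=
          (cycle_conn hn).dist_triangle
      _ ≤ k + 1 := by
          have := dist_eq_one_iff_adj.mpr (cycle_adj_succ hn (u + (k : Fin n)))
          omega

lemma cycle_dist_le (u v : Fin n) : (cycleGraph n).dist u v ≤ (v - u).val := by
  have := cycle_dist_le_cast hn u (v - u).val
  rwa [Fin.cast_val_eq_self, add_sub_cancel] at this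

lemma cycle_walk_le {u v : Fin n} (p : (cycleGraph n).Walk u v) :
    min (v - u).val (u - v).val ≤ p.length := by
  induction p with
  | nil => simp [sub_self]
  | @cons u w v h p ih =>
    rw [cycleGraph_adj'] at h
    have key : min (v - u).val (u - v).val ≤ min (v - w).val (w - v).val + 1 := by
      have h1 := val_sub' v u
      have h2 := val_sub' u v
      have h3 := val_sub' v w
      have h4 := val_sub' w v
      have h5 := val_sub' u w
      have h6 := val_sub' w u
      have b1 := (v - u).isLt; have b2 := (u - v).isLt
      have b3 := (v - w).isLt; have b4 := (w - v).isLt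
      have b5 := (u - w).isLt; have b6 := (w - u).isLt
      have bu := u.isLt; have bv := v.isLt; have bw := w.isLt
      omega
    simp only [SimpleGraph.Walk.length_cons]
    omega

lemma cycle_dist (u v : Fin n) :
    (cycleGraph n).dist u v = min (v - u).val (u - v).val := by
  refine le_antisymm (le_min (cycle_dist_le hn u v) ?_) ?_
  · rw [SimpleGraph.dist_comm]; exact cycle_dist_le hn v u
  · obtain ⟨p, hp⟩ := (cycle_conn hn).exists_walk_length_eq_dist u v
    rw [← hp]; exact cycle_walk_le hn p

end Cycle

section Box
variable {α β : Type*} {G : SimpleGraph α} {H : SimpleGraph β}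

lemma box_walk_le (hG : G.Connected) (hH : H.Connected) :
    ∀ {x y : α × β} (p : (G □ H).Walk x y),
      G.dist x.1 y.1 + H.dist x.2 y.2 ≤ p.length := by
  intro x y p
  induction p with
  | nil => simp
  | @cons u v w h p ih =>
    simp only [SimpleGraph.Walk.length_cons]
    rcases h with ⟨h1, h2⟩ | ⟨h1, h2⟩
    · have t1 : G.dist u.1 w.1 ≤ G.dist u.1 v.1 + G.dist v.1 w.1 := hG.dist_triangle
      have t2 : G.dist u.1 v.1 = 1 := dist_eq_one_iff_adj.mpr h1
      rw [h2] at *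
      omega
    · have t1 : H.dist u.2 w.2 ≤ H.dist u.2 v.2 + H.dist v.2 w.2 := hH.dist_triangle
      have t2 : H.dist u.2 v.2 = 1 := dist_eq_one_iff_adj.mpr h1
      rw [h2] at *
      omega

lemma box_dist (hG : G.Connected) (hH : H.Connected) (a : α) (b : β) (c : α) (d : β) :
    (G □ H).dist (a, b) (c, d) = G.dist a c + H.dist b d := by
  refine le_antisymm ?_ ?_
  · obtain ⟨p, hp⟩ := hG.exists_walk_length_eq_dist a c
    obtain ⟨q, hq⟩ := hH.exists_walk_length_eq_dist b d
    have := SimpleGraph.dist_le ((p.boxProdLeft H b).append (q.boxProdRight G c))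
    rwa [SimpleGraph.Walk.length_append,
      show (p.boxProdLeft H b).length = p.length from SimpleGraph.Walk.length_map _ _,
      show (q.boxProdRight G c).length = q.length from SimpleGraph.Walk.length_map _ _,
      hp, hq] at this
  · obtain ⟨p, hp⟩ := (hG.boxProd hH).exists_walk_length_eq_dist (a, b) (c, d)
    rw [← hp]
    exact box_walk_le hG hH p

end Box

section Key

lemma keyA2 {s : ℕ} (hs : 3 ≤ s) (hodd : Odd s) (i i' a : Fin s)
    (hm : min (i' - i).val (i - i').val = (s - 1) / 2) :
    min (i - a).val (a - i).val + min (i' - a).val (a - i').val = (s - 1) / 2 ∨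
    min (i - a).val (a - i).val + min (i' - a).val (a - i').val = (s - 1) / 2 + 1 := by
  obtain ⟨D, rfl⟩ := hodd
  have h1 := val_sub' i' i
  have h2 := val_sub' i i'
  have h3 := val_sub' i a
  have h4 := val_sub' a i
  have h5 := val_sub' i' a
  have h6 := val_sub' a i'
  have b1 := (i' - i).isLt; have b2 := (i - i').isLt
  have b3 := (i - a).isLt; have b4 := (a - i).isLt
  have b5 := (i' - a).isLt; have b6 := (a - i').isLt
  have bi := i.isLt; have bi' := i'.isLt; have ba := a.isLt
  omega

lemma keyA {s : ℕ} (hs : 3 ≤ s) (hodd : Odd s) (i i' a a' : Fin s)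
    (hm : min (i' - i).val (i - i').val = (s - 1) / 2)
    (h1 : min (i - a).val (a - i).val = min (i - a').val (a' - i).val)
    (h2 : min (i' - a).val (a - i').val = min (i' - a').val (a' - i').val) :
    a = a' := by
  obtain ⟨D, rfl⟩ := hodd
  apply Fin.ext
  have v1 := val_sub' i' i
  have v2 := val_sub' i i'
  have v3 := val_sub' i a
  have v4 := val_sub' a i
  have v5 := val_sub' i' a
  have v6 := val_sub' a i'
  have v7 := val_sub' i a'
  have v8 := val_sub' a' i
  have v9 := val_sub' i' a'
  have v10 := val_sub' a' i'
  have b1 := (i' - i).isLt; have b2 := (i - i').isLt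
  have b3 := (i - a).isLt; have b4 := (a - i).isLt
  have b5 := (i' - a).isLt; have b6 := (a - i').isLt
  have b7 := (i - a').isLt; have b8 := (a' - i).isLt
  have b9 := (i' - a').isLt; have b10 := (a' - i').isLt
  have bi := i.isLt; have bi' := i'.isLt; have ba := a.isLt; have ba' := a'.isLt
  omega

lemma keyB {t : ℕ} (ht : 3 ≤ t) (j j' b b' : Fin t)
    (he : min (j' - j).val (j - j').val = 1)
    (h1 : min (j - b).val (b - j).val = min (j - b').val (b' - j).val)
    (h2 : min (j' - b).val (b - j').val = min (j' - b').val (b' - j').val) :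
    b = b' := by
  apply Fin.ext
  have v1 := val_sub' j' j
  have v2 := val_sub' j j'
  have v3 := val_sub' j b
  have v4 := val_sub' b j
  have v5 := val_sub' j' b
  have v6 := val_sub' b j'
  have v7 := val_sub' j b'
  have v8 := val_sub' b' j
  have v9 := val_sub' j' b'
  have v10 := val_sub' b' j'
  have b1 := (j' - j).isLt; have b2 := (j - j').isLt
  have b3 := (j - b).isLt; have b4 := (b - j).isLt
  have b5 := (j' - b).isLt; have b6 := (b - j').isLt
  have b7 := (j - b').isLt; have b8 := (b' - j).isLt
  have b9 := (j' - b').isLt; have b10 := (b' - j').isLt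
  have bj := j.isLt; have bj' := j'.isLt; have bb := b.isLt; have bb' := b'.isLt
  omega

end Key

/-- `W` is a resolving set of `G`: every pair of distinct vertices is
distinguished by its distance to some vertex of `W`. -/
def IsResolving {V : Type*} (G : SimpleGraph V) (W : Set V) : Prop :=
  ∀ x y : V, x ≠ y → ∃ z ∈ W, G.dist x z ≠ G.dist y z

/-- For odd `s ≥ 3` and `t ≥ 3`: if `x = (i,j)` and `y = (i',j)` are diametral in a
copy of `C_s` (their first coordinates are at distance `(s-1)/2` in `C_s`) and
`z = (i,j')` with `j'` adjacent to `j` in `C_t`, then `{x,y,z}` is a resolving set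
of `C_s □ C_t`. -/
theorem torus_basis_odd (s t : ℕ) (hs : 3 ≤ s) (hodd : Odd s) (ht : 3 ≤ t)
    (i i' : Fin s) (j j' : Fin t)
    (hdiam : (cycleGraph s).dist i i' = (s - 1) / 2)
    (hadj : (cycleGraph t).Adj j j') :
    IsResolving (cycleGraph s □ cycleGraph t) {(i, j), (i', j), (i, j')} := by
  haveI : NeZero s := ⟨by omega⟩
  haveI : NeZero t := ⟨by omega⟩
  have hcs : (cycleGraph s).Connected := cycle_conn hs
  have hct : (cycleGraph t).Connected := cycle_conn ht
  rw [cycle_dist hs] at hdiam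
  have hne : j ≠ j' := hadj.ne
  have he : min (j' - j).val (j - j').val = 1 := by
    rw [cycleGraph_adj'] at hadj
    have hz1 : (j' - j).val ≠ 0 := by
      intro h
      refine hne (Fin.ext ?_)
      have := val_sub' j' j; have := j.isLt; have := j'.isLt; omega
    have hz2 : (j - j').val ≠ 0 := by
      intro h
      refine hne (Fin.ext ?_)
      have := val_sub' j j'; have := j.isLt; have := j'.isLt; omega
    omega
  rintro ⟨a, b⟩ ⟨a', b'⟩ hxy
  by_contra hcon
  push_neg at hcon
  have e1 := hcon (i, j) (by simp)
  have e2 := hcon (i', j) (by simp)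
  have e3 := hcon (i, j') (by simp)
  rw [box_dist hcs hct, box_dist hcs hct, cycle_dist hs, cycle_dist ht,
    cycle_dist hs, cycle_dist ht] at e1 e2 e3
  have g1 := keyA2 hs hodd i i' a hdiam
  have g2 := keyA2 hs hodd i i' a' hdiam
  have hA1 : min (i - a).val (a - i).val = min (i - a').val (a' - i).val := by omega
  have hA2 : min (i' - a).val (a - i').val = min (i' - a').val (a' - i').val := by omega
  have ha : a = a' := keyA hs hodd i i' a a' hdiam hA1 hA2
  subst ha
  have hB1 : min (j - b).val (b - j).val = min (j - b').val (b' - j).val := by omega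
  have hB2 : min (j' - b).val (b - j').val = min (j' - b').val (b' - j').val := by omega
  have hb : b = b' := keyB ht j j' b b' he hB1 hB2
  exact hxy (by rw [hb])
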